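/- Let Γ be a countably infinite group. If k ≥ 2, then Free(k^Γ) is dense in k^Γ. -/

import Mathlib

open scoped Pointwise
section ShiftDefs

variable {Γ : Type} [Group Γ] {A B : Type*}

/-- The Bernoulli shift action of `Γ`: `(γ · x)(δ) = x(δγ)`. -/
def shiftAct (γ : Γ) (x : Γ → A) : Γ → A := fun δ => x (δ * γ)

/-- The free part of the shift `Γ ↷ (Γ → A)`. -/
def freePart (Γ : Type) [Group Γ] (A : Type*) : Set (Γ → A) :=
  {x | ∀ γ : Γ, shiftAct γ x = x → γ = 1}

/-- A subshift: a closed shift-invariant subset. -/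
def IsSubshift [TopologicalSpace A] (S : Set (Γ → A)) : Prop :=
  IsClosed S ∧ ∀ γ : Γ, ∀ x ∈ S, shiftAct γ x ∈ S

/-- A subshift of finite type: `⋂ γ (γ · C)` for some clopen `C`. -/
def IsSFT [TopologicalSpace A] (S : Set (Γ → A)) : Prop :=
  ∃ C : Set (Γ → A), IsClopen C ∧ S = ⋂ γ : Γ, shiftAct γ ⁻¹' C

/-- The stabilizer of a point under the shift action. -/
def ptStab (x : Γ → A) : Set Γ := {γ | shiftAct γ x = x}

/-- `Stab(π)`: elements fixing every point in the image of `π` (domain `dom`). -/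
def mapStab (π : (Γ → A) → (Γ → B)) (dom : Set (Γ → A)) : Set Γ :=
  {γ | ∀ x ∈ dom, shiftAct γ (π x) = π x}

/-- `Γ`-equivariance of `π` on the set `dom`. -/
def EquivariantOn (π : (Γ → A) → (Γ → B)) (dom : Set (Γ → A)) : Prop :=
  ∀ x ∈ dom, ∀ γ : Γ, π (shiftAct γ x) = shiftAct γ (π x)

/-- `Col(F, ℓ)`: proper `ℓ`-colorings of the Cayley graph `G(Γ, F)`. -/
def properCol (F : Finset Γ) (ℓ : ℕ) : Set (Γ → Fin ℓ) :=
  {x | ∀ γ : Γ, ∀ σ ∈ F, x γ ≠ x (σ * γ)}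

end ShiftDefs

noncomputable def pickEl {Γ : Type} [Group Γ] [Infinite Γ] [DecidableEq Γ]
    (S : Finset Γ) (g : Γ) : Γ :=
  Classical.choose (Infinite.exists_notMem_finset (S ∪ S.image (· * g⁻¹)))

lemma pickEl_spec {Γ : Type} [Group Γ] [Infinite Γ] [DecidableEq Γ]
    (S : Finset Γ) (g : Γ) : pickEl S g ∉ S ∧ pickEl S g * g ∉ S := by
  have h : pickEl S g ∉ S ∪ S.image (· * g⁻¹) :=
    Classical.choose_spec (Infinite.exists_notMem_finset (S ∪ S.image (· * g⁻¹)))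
  rw [Finset.mem_union, not_or] at h
  refine ⟨h.1, fun hc => h.2 ?_⟩
  rw [Finset.mem_image]
  exact ⟨pickEl S g * g, hc, by group⟩

noncomputable def gSet {Γ : Type} [Group Γ] [Infinite Γ] [DecidableEq Γ]
    (F : Finset Γ) (e : ℕ → Γ) : ℕ → Finset Γ
  | 0 => F
  | n+1 => gSet F e n ∪ {pickEl (gSet F e n) (e n), pickEl (gSet F e n) (e n) * e n}

lemma gSet_mono {Γ : Type} [Group Γ] [Infinite Γ] [DecidableEq Γ]
    (F : Finset Γ) (e : ℕ → Γ) : Monotone (gSet F e) := by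
  apply monotone_nat_of_le_succ
  intro n
  exact Finset.subset_union_left

lemma key_free_approx {Γ : Type} [Group Γ] [Countable Γ] [Infinite Γ]
    (k : ℕ) (hk : 2 ≤ k) (x : Γ → Fin k) (F : Finset Γ) :
    ∃ y ∈ freePart Γ (Fin k), ∀ γ ∈ F, y γ = x γ := by
  classical
  obtain ⟨e, he⟩ := exists_surjective_nat Γ
  set g := gSet F e with hg
  set δ : ℕ → Γ := fun n => pickEl (g n) (e n) with hδ
  have hF : ∀ n, F ⊆ g n := fun n => gSet_mono F e (Nat.zero_le n)
  have hδ1 : ∀ n, δ n ∉ g n := fun n => (pickEl_spec (g n) (e n)).1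
  have hδ2 : ∀ n, δ n * e n ∉ g n := fun n => (pickEl_spec (g n) (e n)).2
  have hmem1 : ∀ n, δ n ∈ g (n+1) := by intro n; simp [hg, gSet, hδ]
  have hmem2 : ∀ n, δ n * e n ∈ g (n+1) := by intro n; simp [hg, gSet, hδ]
  set B : Set Γ := {γ | ∃ n, e n ≠ 1 ∧ γ = δ n * e n} with hB
  set z0 : Fin k := ⟨0, by omega⟩
  set z1 : Fin k := ⟨1, by omega⟩
  have hz : z0 ≠ z1 := by simp [z0, z1, Fin.ext_iff]
  set y : Γ → Fin k := fun γ => if γ ∈ B then z1 else if γ ∈ F then x γ else z0 with hy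
  have hBF : ∀ γ ∈ B, γ ∉ F := by
    rintro γ ⟨m, hm, rfl⟩ hγF
    exact hδ2 m (hF m hγF)
  have hδB : ∀ n, δ n ∉ B := by
    rintro n ⟨m, hm1, heq⟩
    rcases lt_trichotomy m n with h | rfl | h
    · exact hδ1 n (heq ▸ gSet_mono F e h (hmem2 m))
    · exact hm1 (by
        have := heq
        exact mul_left_cancel (this.symm.trans (mul_one _).symm))
    · exact hδ2 m (heq ▸ gSet_mono F e h (hmem1 n))
  refine ⟨y, ?_, ?_⟩
  · intro γ hfix
    by_contra hγ
    obtain ⟨n, rfl⟩ := he γ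
    have h1 : y (δ n * e n) = y (δ n) := congrFun hfix (δ n)
    have h2 : y (δ n * e n) = z1 := by
      simp only [hy]
      rw [if_pos ⟨n, hγ, rfl⟩]
    have h3 : y (δ n) = z0 := by
      simp only [hy]
      rw [if_neg (hδB n), if_neg (fun hc => hδ1 n (hF n hc))]
    exact hz (h3 ▸ h2 ▸ h1).symm
  · intro γ hγF
    simp only [hy]
    rw [if_neg (fun hc => hBF γ hc hγF), if_pos hγF]

/-- If `k ≥ 2`, then `Free(k^Γ)` is dense in `k^Γ`. -/
theorem stmt19 {Γ : Type} [Group Γ] [Countable Γ] [Infinite Γ]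
    (k : ℕ) (hk : 2 ≤ k) :
    Dense (freePart Γ (Fin k)) := by
  rw [dense_iff_inter_open]
  rintro U hU ⟨x, hx⟩
  obtain ⟨I, u, hu, hsub⟩ := isOpen_pi_iff.mp hU x hx
  obtain ⟨y, hyfree, hyx⟩ := key_free_approx k hk x I
  refine ⟨y, hsub ?_, hyfree⟩
  intro a ha
  rw [hyx a ha]
  exact (hu a ha).2
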